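/- Let {a_n}, {b_n}, {c_n} be finite sequences of nonnegative reals and (X,Y) integer-valued with P(X=i, Y=j) = K a_i b_j c_{i+j}. If {c_n} is log-concave (with interval support), then X is stochastically decreasing in Y: for each j with both conditioning events of positive probability, the conditional law of X given Y=j stochastically dominates the conditional law of X given Y=j+1. -/
import Mathlib


open Finset

/-- A nonnegative sequence is log-concave with interval support. -/
def LogConcaveSeq (q : ℕ → ℝ) : Prop :=
  (∀ j, q j * q (j + 2) ≤ q (j + 1) ^ 2) ∧
  (∀ i j k, i ≤ j → j ≤ k → 0 < q i → 0 < q k → 0 < q j)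

lemma logConcave_key (c : ℕ → ℝ) (hc : ∀ i, 0 ≤ c i) (hclc : LogConcaveSeq c) :
    ∀ m n, m ≤ n → c m * c (n + 1) ≤ c (m + 1) * c n := by
  intro m n hmn
  induction n, hmn using Nat.le_induction with
  | base => ring_nf; exact le_refl _
  | succ n hmn ih =>
    rcases (hc (n + 1)).lt_or_eq with hpos | hzero
    · have h2 := hclc.1 n
      have h1 : c m * c (n + 1) * c (n + 2) ≤ c (m + 1) * c n * c (n + 2) :=
        mul_le_mul_of_nonneg_right ih (hc _)
      have := hc (m + 1)
      nlinarith [hc m, hc (n + 2)]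
    · rcases (hc m).lt_or_eq with hm | hm
      · rcases (hc (n + 2)).lt_or_eq with hn2 | hn2
        · exfalso
          have := hclc.2 m (n + 1) (n + 2) (by omega) (by omega) hm hn2
          linarith
        · nlinarith [mul_nonneg (hc (m + 1)) (hc (n + 1))]
      · nlinarith [mul_nonneg (hc (m + 1)) (hc (n + 1)), hc (n + 2)]

lemma sum_cross (s u : Finset ℕ) (f g : ℕ → ℝ)
    (h : ∀ i' ∈ u, ∀ i ∈ s, g i * f i' ≤ f i * g i') :
    (∑ i ∈ s, g i) * (∑ i ∈ u, f i) ≤ (∑ i ∈ s, f i) * (∑ i ∈ u, g i) := by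
  rw [Finset.sum_mul_sum, Finset.sum_mul_sum]
  exact Finset.sum_le_sum fun i hi => Finset.sum_le_sum fun i' hi' => h i' hi' i hi

/-- Lemma (abc), part (iii): if `P(X=i, Y=j) = K aᵢ bⱼ c_{i+j}` with `c` log-concave, then
`X` is stochastically decreasing in `Y`: the conditional law of `X` given `Y = j` (with
weights `i ↦ aᵢ bⱼ c_{i+j}`) stochastically dominates the conditional law of `X` given
`Y = j+1`, whenever both conditioning events have positive probability.  Here `a` is
supported on `{0, …, N}`. -/
theorem stmt_6 (N : ℕ) (a b c : ℕ → ℝ)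
    (ha : ∀ i, 0 ≤ a i) (hb : ∀ i, 0 ≤ b i) (hc : ∀ i, 0 ≤ c i)
    (hsupp : ∀ i, N < i → a i = 0)
    (hclc : LogConcaveSeq c) (j : ℕ)
    (hj : 0 < ∑ i ∈ Finset.range (N+1), a i * b j * c (i + j))
    (hj1 : 0 < ∑ i ∈ Finset.range (N+1), a i * b (j+1) * c (i + (j+1))) :
    ∀ t : ℕ,
      (∑ i ∈ (Finset.range (N+1)).filter (fun i => t ≤ i), a i * b (j+1) * c (i + (j+1)))
          / (∑ i ∈ Finset.range (N+1), a i * b (j+1) * c (i + (j+1)))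
        ≤ (∑ i ∈ (Finset.range (N+1)).filter (fun i => t ≤ i), a i * b j * c (i + j))
          / (∑ i ∈ Finset.range (N+1), a i * b j * c (i + j)) := by
  intro t
  set f : ℕ → ℝ := fun i => a i * b j * c (i + j) with hf
  set g : ℕ → ℝ := fun i => a i * b (j+1) * c (i + (j+1)) with hg
  set s := (Finset.range (N+1)).filter (fun i => t ≤ i) with hs
  set u := (Finset.range (N+1)).filter (fun i => ¬ t ≤ i) with hu
  rw [div_le_div_iff₀ hj1 hj]
  have hsplit0 : (∑ i ∈ Finset.range (N+1), f i) = (∑ i ∈ s, f i) + (∑ i ∈ u, f i) :=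
    (Finset.sum_filter_add_sum_filter_not _ _ _).symm
  have hsplit1 : (∑ i ∈ Finset.range (N+1), g i) = (∑ i ∈ s, g i) + (∑ i ∈ u, g i) :=
    (Finset.sum_filter_add_sum_filter_not _ _ _).symm
  have hcross : (∑ i ∈ s, g i) * (∑ i ∈ u, f i) ≤ (∑ i ∈ s, f i) * (∑ i ∈ u, g i) := by
    apply sum_cross
    intro i' hi' i hi
    simp only [hs, hu, Finset.mem_filter, Finset.mem_range] at hi hi'
    have hle : i' + j ≤ i + j := by omega
    have hkey := logConcave_key c hc hclc (i' + j) (i + j) hle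
    have h1 : i' + j + 1 = i' + (j + 1) := by ring
    have h2 : i + j + 1 = i + (j + 1) := by ring
    rw [h1, h2] at hkey
    simp only [hf, hg]
    have := ha i
    have := ha i'
    have := hb j
    have := hb (j+1)
    nlinarith [hc (i + (j+1)), hc (i' + j), hc (i + j), hc (i' + (j+1)), mul_nonneg (ha i) (ha i'), mul_nonneg (hb j) (hb (j+1)), mul_nonneg (mul_nonneg (ha i) (ha i')) (mul_nonneg (hb j) (hb (j+1)))]
  rw [hsplit0, hsplit1]
  nlinarith [hcross]
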